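/- Define the optimal policies by the backward recursion ψ*_M(x) = G_M(x) and ψ*_k(x) = G_k(x)·M_{k+1}(ψ*_{k+1})(x) for k = M−1,…,0, assuming G_M > 0 and all intermediate integrals are finite and positive. Then for every k and x_{k-1}, the twisted potential satisfies G_k^{ψ*}(x_k) = 1 for all x_k with 0 ≤ k ≤ M (using ψ*_{M+1}≡1), and consequently Z^{ψ*} = M_0(ψ*_0); i.e., under the optimal policy the Feynman–Kac integral is computed exactly by a single deterministic constant M_0(ψ*_0) = Z. -/

import Mathlib

open MeasureTheory

lemma fin_prod_div_telescope : ∀ (n : ℕ) (f : Fin (n + 1) → ℝ), (∀ i, f i ≠ 0) →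
    ∏ j : Fin n, f j.succ / f j.castSucc = f (Fin.last n) / f 0 := by
  intro n
  induction n with
  | zero => intro f hf; simp [div_self (hf 0)]
  | succ n ih =>
    intro f hf
    rw [Fin.prod_univ_castSucc]
    have h1 : ∀ j : Fin n, f j.castSucc.succ / f j.castSucc.castSucc
        = (f ∘ Fin.castSucc) j.succ / (f ∘ Fin.castSucc) j.castSucc := by
      intro j
      simp only [Function.comp, Fin.succ_castSucc]
    rw [Finset.prod_congr rfl fun j _ => h1 j, ih (f ∘ Fin.castSucc) fun i => hf _]
    have h0 : (f ∘ Fin.castSucc) 0 = f 0 := by simp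
    have hl : (f ∘ Fin.castSucc) (Fin.last n) = f (Fin.last n).castSucc := rfl
    rw [h0, hl, Fin.succ_last]
    have ha := hf (Fin.last n).castSucc
    have hb := hf 0
    field_simp

noncomputable def PhiChain {X : Type*} [MeasurableSpace X] (ν : Measure X) :
    ℕ → (ℕ → X → X → ENNReal) → X → ENNReal
  | 0, _, _ => 1
  | n + 1, κ, x => ∫⁻ y, κ 0 x y * PhiChain ν n (fun j => κ (j + 1)) y ∂ν

lemma phiChain_measurable {X : Type*} [MeasurableSpace X] (ν : Measure X) [SigmaFinite ν] :
    ∀ (n : ℕ) (κ : ℕ → X → X → ENNReal), (∀ j, Measurable (Function.uncurry (κ j))) →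
      Measurable (PhiChain ν n κ) := by
  intro n
  induction n with
  | zero => intro κ hκ; simpa [PhiChain] using measurable_const
  | succ n ih =>
    intro κ hκ
    have h : Measurable (fun p : X × X => κ 0 p.1 p.2 * PhiChain ν n (fun j => κ (j + 1)) p.2) :=
      (hκ 0).mul ((ih _ fun j => hκ (j + 1)).comp measurable_snd)
    exact h.lintegral_prod_right'

lemma lintegral_pi_chain {X : Type*} [MeasurableSpace X] (ν : Measure X) [SigmaFinite ν] :
    ∀ (n : ℕ) (g : X → ENNReal) (κ : ℕ → X → X → ENNReal), Measurable g →
      (∀ j, Measurable (Function.uncurry (κ j))) →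
      (∫⁻ x : Fin (n + 1) → X, g (x 0) * ∏ j : Fin n, κ j (x j.castSucc) (x j.succ)
          ∂(Measure.pi fun _ => ν))
        = ∫⁻ x, g x * PhiChain ν n κ x ∂ν := by
  intro n
  induction n with
  | zero =>
    intro g κ hg hκ
    simp only [Finset.univ_eq_empty, Finset.prod_empty, mul_one, PhiChain]
    have hmp := measurePreserving_funUnique (β := X) ν (Fin 1)
    rw [← hmp.lintegral_comp hg]
    rfl
  | succ n ih =>
    intro g κ hg hκ
    have hmp := measurePreserving_piFinSuccAbove (fun _ : Fin (n + 2) => ν) 0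
    set e := MeasurableEquiv.piFinSuccAbove (fun _ : Fin (n + 2) => X) 0 with he
    set F : (Fin (n + 2) → X) → ENNReal :=
      fun x => g (x 0) * ∏ j : Fin (n + 1), κ j (x j.castSucc) (x j.succ) with hF
    have hFmeas : Measurable F := by
      apply (hg.comp (measurable_pi_apply 0)).mul
      apply Finset.measurable_prod
      intro j _
      exact Measurable.comp (g := Function.uncurry (κ (j : ℕ)))
        (f := fun x : Fin (n + 2) → X => (x j.castSucc, x j.succ)) (hκ _)
        ((measurable_pi_apply _).prodMk (measurable_pi_apply _))
    have hFe : Measurable fun p : X × (Fin (n + 1) → X) => F (e.symm p) :=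
      hFmeas.comp e.symm.measurable
    have key : (∫⁻ x : Fin (n + 2) → X, F x ∂(Measure.pi fun _ => ν))
        = ∫⁻ p : X × (Fin (n + 1) → X), F (e.symm p)
            ∂(ν.prod (Measure.pi fun _ => ν)) := by
      rw [← hmp.lintegral_comp hFe]
      refine lintegral_congr fun x => ?_
      simp
    have hcons : ∀ (a : X) (y : Fin (n + 1) → X), e.symm (a, y) = Fin.cons a y := by
      intro a y
      rw [he]
      simp [MeasurableEquiv.piFinSuccAbove, Fin.insertNthEquiv, Fin.insertNth_zero']
    have hFcons : ∀ (a : X) (y : Fin (n + 1) → X),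
        F (Fin.cons a y) = g a * (κ 0 a (y 0) *
          ∏ j : Fin n, κ ((j : ℕ) + 1) (y j.castSucc) (y j.succ)) := by
      intro a y
      simp only [hF, Fin.prod_univ_succ, Fin.val_zero, Fin.castSucc_zero, Fin.cons_zero,
        Fin.val_succ, ← Fin.succ_castSucc, Fin.cons_succ]
    rw [key, lintegral_prod _ hFe.aemeasurable]
    refine lintegral_congr fun a => ?_
    have hk0 : Measurable (fun z => κ 0 a z) :=
      (hκ 0).comp measurable_prodMk_left
    calc (∫⁻ y, F (e.symm (a, y)) ∂(Measure.pi fun _ => ν))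
        = ∫⁻ y : Fin (n + 1) → X, g a * (κ 0 a (y 0) *
            ∏ j : Fin n, κ ((j : ℕ) + 1) (y j.castSucc) (y j.succ))
          ∂(Measure.pi fun _ => ν) := by
          refine lintegral_congr fun y => ?_
          rw [hcons, hFcons]
      _ = g a * ∫⁻ y : Fin (n + 1) → X, κ 0 a (y 0) *
            ∏ j : Fin n, κ ((j : ℕ) + 1) (y j.castSucc) (y j.succ)
          ∂(Measure.pi fun _ => ν) := by
          refine lintegral_const_mul _ ?_
          refine (hk0.comp (measurable_pi_apply 0)).mul ?_
          refine Finset.measurable_prod _ fun j _ => ?_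
          exact Measurable.comp (g := Function.uncurry (κ ((j : ℕ) + 1)))
            (f := fun y : Fin (n + 1) → X => (y j.castSucc, y j.succ)) (hκ _)
            ((measurable_pi_apply _).prodMk (measurable_pi_apply _))
      _ = g a * ∫⁻ z, κ 0 a z * PhiChain ν n (fun i => κ (i + 1)) z ∂ν :=
          congrArg (fun t => g a * t)
            (ih (fun z => κ 0 a z) (fun i => κ (i + 1)) hk0 (fun j => hκ (j + 1)))
      _ = g a * PhiChain ν (n + 1) κ a := by simp [PhiChain]


/-- **Optimality of the backward-recursion policy.**
If `ψ*_M = G_M`, `ψ*_k = G_k · M_{k+1}(ψ*_{k+1})` for `k < M` and `ψ*_{M+1} ≡ 1`,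
then all twisted potentials equal one, and the twisted normalising constant is
computed exactly by the deterministic constant `M_0(ψ*_0)`, which equals `Z`. -/
theorem optimal_policy_exact_normalising_constant
    {X : Type*} [MeasurableSpace X] (ν : Measure X) [SigmaFinite ν]
    (M : ℕ)
    (M0 : X → ℝ) (Mk : ℕ → X → X → ℝ) (G : ℕ → X → ℝ) (ψs : ℕ → X → ℝ)
    -- M0 is a probability density
    (hM0meas : Measurable M0) (hM0pos : ∀ x, 0 ≤ M0 x) (hM0int : ∫ x, M0 x ∂ν = 1)
    -- the Mk are probability transition densities
    (hMkmeas : ∀ k, Measurable (Function.uncurry (Mk k)))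
    (hMkpos : ∀ k x y, 0 ≤ Mk k x y)
    (hMkint : ∀ k x, ∫ y, Mk k x y ∂ν = 1)
    -- the potentials are strictly positive and measurable
    (hGmeas : ∀ k, Measurable (G k)) (hGpos : ∀ k x, 0 < G k x)
    -- backward recursion defining the optimal policy, with ψ*_{M+1} ≡ 1
    (hψtop : ∀ x, ψs (M + 1) x = 1)
    (hψM : ∀ x, ψs M x = G M x)
    (hψrec : ∀ k < M, ∀ x, ψs k x = G k x * ∫ y, ψs (k + 1) y * Mk (k + 1) x y ∂ν)
    -- intermediate integrals are finite and positive
    (hψpos : ∀ k x, 0 < ψs k x)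
    (hMψpos : ∀ k x, 0 < ∫ y, ψs k y * Mk k x y ∂ν)
    -- Z is finite and positive
    (hZpos : 0 < ∫ x : Fin (M + 1) → X,
        G 0 (x 0) * M0 (x 0) *
          ∏ j : Fin M, G (j + 1) (x j.succ) * Mk (j + 1) (x j.castSucc) (x j.succ)
        ∂(Measure.pi fun _ => ν)) :
    -- all twisted potentials are identically one ...
    (∀ k ≤ M, ∀ x : X,
        G k x * (∫ y, ψs (k + 1) y * Mk (k + 1) x y ∂ν) / ψs k x = 1) ∧
    -- ... hence the twisted normalising constant Z^{ψ*} is the constant M_0(ψ*_0) ...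
    (∫ x : Fin (M + 1) → X,
        ((∫ y, ψs 0 y * M0 y ∂ν) * G 0 (x 0) * (∫ y, ψs 1 y * Mk 1 (x 0) y ∂ν) / ψs 0 (x 0)) *
          (ψs 0 (x 0) * M0 (x 0) / ∫ y, ψs 0 y * M0 y ∂ν) *
          ∏ j : Fin M,
            (G (j + 1) (x j.succ) * (∫ y, ψs (j + 2) y * Mk (j + 2) (x j.succ) y ∂ν) /
                ψs (j + 1) (x j.succ)) *
              (ψs (j + 1) (x j.succ) * Mk (j + 1) (x j.castSucc) (x j.succ) /
                ∫ y, ψs (j + 1) y * Mk (j + 1) (x j.castSucc) y ∂ν)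
        ∂(Measure.pi fun _ => ν)) = ∫ y, ψs 0 y * M0 y ∂ν ∧
    -- ... which equals Z
    (∫ y, ψs 0 y * M0 y ∂ν) =
      ∫ x : Fin (M + 1) → X,
        G 0 (x 0) * M0 (x 0) *
          ∏ j : Fin M, G (j + 1) (x j.succ) * Mk (j + 1) (x j.castSucc) (x j.succ)
        ∂(Measure.pi fun _ => ν) := by
  classical
  -- a function with positive integral is integrable
  have integrable_of_pos : ∀ f : X → ℝ, 0 < (∫ y, f y ∂ν) → Integrable f ν := by
    intro f hf
    by_contra h
    rw [integral_undef h] at hf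
    exact lt_irrefl 0 hf
  -- the top integral is one
  have hItop : ∀ x, (∫ y, ψs (M + 1) y * Mk (M + 1) x y ∂ν) = 1 := by
    intro x
    simp only [hψtop, one_mul]
    exact hMkint (M + 1) x
  -- key backward identity, valid also at k = M
  have hK : ∀ k ≤ M, ∀ x, G k x * (∫ y, ψs (k + 1) y * Mk (k + 1) x y ∂ν) = ψs k x := by
    intro k hk x
    rcases lt_or_eq_of_le hk with h | h
    · exact (hψrec k h x).symm
    · subst h
      rw [hItop, mul_one, hψM]
  -- Part 1
  have part1 : ∀ k ≤ M, ∀ x : X,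
      G k x * (∫ y, ψs (k + 1) y * Mk (k + 1) x y ∂ν) / ψs k x = 1 := by
    intro k hk x
    rw [hK k hk x]
    exact div_self (hψpos k x).ne'
  -- measurability of the optimal policies
  have hψmeasAux : ∀ j : ℕ, Measurable (ψs (M - j)) := by
    intro j
    induction j with
    | zero =>
      have h : ψs (M - 0) = G M := by funext x; simpa using hψM x
      rw [h]; exact hGmeas M
    | succ j ih =>
      by_cases h : M ≤ j
      · have h' : M - (j + 1) = M - j := by omega
        rwa [h']
      · push_neg at h
        have hlt : M - (j + 1) < M := by omega
        have hsucc : M - (j + 1) + 1 = M - j := by omega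
        have hfun : ψs (M - (j + 1)) = fun x => G (M - (j + 1)) x *
            ∫ y, ψs (M - (j + 1) + 1) y * Mk (M - (j + 1) + 1) x y ∂ν := by
          funext x; exact hψrec _ hlt x
        rw [hfun]
        refine (hGmeas _).mul ?_
        have hψm : Measurable (ψs (M - (j + 1) + 1)) := by rw [hsucc]; exact ih
        have hknm : StronglyMeasurable (Function.uncurry fun x y =>
            ψs (M - (j + 1) + 1) y * Mk (M - (j + 1) + 1) x y) :=
          ((hψm.comp measurable_snd).mul (hMkmeas _)).stronglyMeasurable
        exact hknm.integral_prod_right.measurable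
  have hψ0meas : Measurable (ψs 0) := by simpa using hψmeasAux M
  -- the ENNReal-valued kernels
  set κ : ℕ → X → X → ENNReal :=
    fun j x y => ENNReal.ofReal (G (j + 1) y * Mk (j + 1) x y) with hκdef
  have hκmeas : ∀ j, Measurable (Function.uncurry (κ j)) := by
    intro j
    apply ENNReal.measurable_ofReal.comp
    exact ((hGmeas (j + 1)).comp measurable_snd).mul (hMkmeas (j + 1))
  -- PhiChain computes the backward integrals
  have Phi_eq : ∀ m k, k + m = M → ∀ x, PhiChain ν m (fun j => κ (k + j)) x
      = ENNReal.ofReal (∫ y, ψs (k + 1) y * Mk (k + 1) x y ∂ν) := by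
    intro m
    induction m with
    | zero =>
      intro k hk x
      have hkM : k = M := by omega
      subst hkM
      rw [hItop]
      simp [PhiChain]
    | succ m ih =>
      intro k hk x
      have hk1 : k + 1 ≤ M := by omega
      calc PhiChain ν (m + 1) (fun j => κ (k + j)) x
          = ∫⁻ y, κ k x y * PhiChain ν m (fun j => κ (k + 1 + j)) y ∂ν := by
            have harg : (fun j => κ (k + (j + 1))) = fun j => κ (k + 1 + j) := by
              funext j; rw [show k + (j + 1) = k + 1 + j from by omega]
            simp only [PhiChain, Nat.add_zero, harg]
        _ = ∫⁻ y, ENNReal.ofReal (ψs (k + 1) y * Mk (k + 1) x y) ∂ν := by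
            refine lintegral_congr fun y => ?_
            rw [ih (k + 1) (by omega) y, hκdef,
              ← ENNReal.ofReal_mul
                (mul_nonneg (hGpos (k + 1) y).le (hMkpos (k + 1) x y))]
            congr 1
            have hky := hK (k + 1) hk1 y
            rw [← hky]; ring
        _ = ENNReal.ofReal (∫ y, ψs (k + 1) y * Mk (k + 1) x y ∂ν) :=
            (ofReal_integral_eq_lintegral_ofReal
              (integrable_of_pos _ (hMψpos (k + 1) x))
              (Filter.Eventually.of_forall fun y =>
                mul_nonneg (hψpos _ y).le (hMkpos _ x y))).symm
  -- the untwisted integrand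
  set Fz : (Fin (M + 1) → X) → ℝ := fun x => G 0 (x 0) * M0 (x 0) *
      ∏ j : Fin M, G ((j : ℕ) + 1) (x j.succ) * Mk ((j : ℕ) + 1) (x j.castSucc) (x j.succ)
    with hFzdef
  have hFznn : ∀ x, 0 ≤ Fz x := by
    intro x
    refine mul_nonneg (mul_nonneg (hGpos _ _).le (hM0pos _)) ?_
    exact Finset.prod_nonneg fun j _ => mul_nonneg (hGpos _ _).le (hMkpos _ _ _)
  have hFzmeas : Measurable Fz := by
    refine ((hGmeas 0).comp (measurable_pi_apply 0)).mul
      ((hM0meas.comp (measurable_pi_apply 0))) |>.mul ?_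
    refine Finset.measurable_prod _ fun j _ => ?_
    refine Measurable.mul ?_ ?_
    · exact (hGmeas _).comp (measurable_pi_apply _)
    · exact Measurable.comp (g := Function.uncurry (Mk ((j : ℕ) + 1)))
        (f := fun x : Fin (M + 1) → X => (x j.castSucc, x j.succ)) (hMkmeas _)
        ((measurable_pi_apply _).prodMk (measurable_pi_apply _))
  have hg0meas : Measurable fun a => ENNReal.ofReal (G 0 a * M0 a) :=
    ENNReal.measurable_ofReal.comp ((hGmeas 0).mul hM0meas)
  have hstep1 : (∫ x, Fz x ∂(Measure.pi fun _ : Fin (M + 1) => ν))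
      = (∫⁻ x, ENNReal.ofReal (Fz x) ∂(Measure.pi fun _ : Fin (M + 1) => ν)).toReal :=
    integral_eq_lintegral_of_nonneg_ae (Filter.Eventually.of_forall hFznn)
      hFzmeas.aestronglyMeasurable
  have hstep2 : ∀ x : Fin (M + 1) → X, ENNReal.ofReal (Fz x)
      = ENNReal.ofReal (G 0 (x 0) * M0 (x 0)) *
          ∏ j : Fin M, κ (j : ℕ) (x j.castSucc) (x j.succ) := by
    intro x
    rw [hFzdef]
    rw [ENNReal.ofReal_mul (mul_nonneg (hGpos _ _).le (hM0pos _))]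
    congr 1
    rw [ENNReal.ofReal_prod_of_nonneg
      (fun j _ => mul_nonneg (hGpos _ _).le (hMkpos _ _ _))]
  have hstep3 : (∫⁻ x, ENNReal.ofReal (Fz x) ∂(Measure.pi fun _ : Fin (M + 1) => ν))
      = ∫⁻ a, ENNReal.ofReal (G 0 a * M0 a) * PhiChain ν M κ a ∂ν := by
    rw [lintegral_congr hstep2]
    exact lintegral_pi_chain ν M _ κ hg0meas hκmeas
  have hPhiM : ∀ a, PhiChain ν M κ a
      = ENNReal.ofReal (∫ y, ψs 1 y * Mk 1 a y ∂ν) := by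
    intro a
    have h := Phi_eq M 0 (by omega) a
    simpa using h
  have hK0 : ∀ x, G 0 x * (∫ y, ψs 1 y * Mk 1 x y ∂ν) = ψs 0 x := by
    intro x
    have h := hK 0 (Nat.zero_le M) x
    simpa using h
  have hstep4 : (∫⁻ a, ENNReal.ofReal (G 0 a * M0 a) * PhiChain ν M κ a ∂ν)
      = ∫⁻ a, ENNReal.ofReal (ψs 0 a * M0 a) ∂ν := by
    refine lintegral_congr fun a => ?_
    rw [hPhiM a,
      ← ENNReal.ofReal_mul (mul_nonneg (hGpos 0 a).le (hM0pos a))]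
    congr 1
    rw [← hK0 a]; ring
  have hZeq : (∫ x, Fz x ∂(Measure.pi fun _ : Fin (M + 1) => ν))
      = (∫⁻ a, ENNReal.ofReal (ψs 0 a * M0 a) ∂ν).toReal := by
    rw [hstep1, hstep3, hstep4]
  have hLfin : (∫⁻ a, ENNReal.ofReal (ψs 0 a * M0 a) ∂ν) ≠ ⊤ := by
    intro h
    rw [hZeq, h] at hZpos
    simp at hZpos
  have hψ0M0nn : (0 : X → ℝ) ≤ᵐ[ν] fun y => ψs 0 y * M0 y :=
    Filter.Eventually.of_forall fun y => mul_nonneg (hψpos 0 y).le (hM0pos y)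
  have hint : Integrable (fun y => ψs 0 y * M0 y) ν := by
    constructor
    · exact (hψ0meas.mul hM0meas).aestronglyMeasurable
    · rw [hasFiniteIntegral_iff_ofReal hψ0M0nn]
      exact lt_top_iff_ne_top.mpr hLfin
  have hCof : ENNReal.ofReal (∫ y, ψs 0 y * M0 y ∂ν)
      = ∫⁻ a, ENNReal.ofReal (ψs 0 a * M0 a) ∂ν :=
    ofReal_integral_eq_lintegral_ofReal hint hψ0M0nn
  have part3 : (∫ y, ψs 0 y * M0 y ∂ν)
      = ∫ x, Fz x ∂(Measure.pi fun _ : Fin (M + 1) => ν) := by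
    rw [hZeq, ← hCof, ENNReal.toReal_ofReal
      (integral_nonneg fun y => mul_nonneg (hψpos 0 y).le (hM0pos y))]
  have hCpos : 0 < ∫ y, ψs 0 y * M0 y ∂ν := by
    rw [part3]; exact hZpos
  -- pointwise identity between the twisted and untwisted integrands
  have hTU : ∀ x : Fin (M + 1) → X,
      ((∫ y, ψs 0 y * M0 y ∂ν) * G 0 (x 0) * (∫ y, ψs 1 y * Mk 1 (x 0) y ∂ν) / ψs 0 (x 0)) *
          (ψs 0 (x 0) * M0 (x 0) / ∫ y, ψs 0 y * M0 y ∂ν) *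
          ∏ j : Fin M,
            (G ((j : ℕ) + 1) (x j.succ) *
                (∫ y, ψs ((j : ℕ) + 2) y * Mk ((j : ℕ) + 2) (x j.succ) y ∂ν) /
                ψs ((j : ℕ) + 1) (x j.succ)) *
              (ψs ((j : ℕ) + 1) (x j.succ) * Mk ((j : ℕ) + 1) (x j.castSucc) (x j.succ) /
                ∫ y, ψs ((j : ℕ) + 1) y * Mk ((j : ℕ) + 1) (x j.castSucc) y ∂ν)
        = Fz x := by
    intro x
    set C := ∫ y, ψs 0 y * M0 y ∂ν with hCdef
    set f : Fin (M + 1) → ℝ :=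
      fun i => ∫ y, ψs ((i : ℕ) + 1) y * Mk ((i : ℕ) + 1) (x i) y ∂ν with hfdef
    have hfne : ∀ i, f i ≠ 0 := fun i => (hMψpos _ _).ne'
    have htel := fin_prod_div_telescope M f hfne
    -- the first two factors
    have hA : C * G 0 (x 0) * (∫ y, ψs 1 y * Mk 1 (x 0) y ∂ν) / ψs 0 (x 0) = C := by
      rw [mul_assoc, hK0 (x 0), mul_div_assoc, div_self (hψpos 0 (x 0)).ne', mul_one]
    -- each factor of the product
    have hfac : ∀ j : Fin M,
        (G ((j : ℕ) + 1) (x j.succ) *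
            (∫ y, ψs ((j : ℕ) + 2) y * Mk ((j : ℕ) + 2) (x j.succ) y ∂ν) /
            ψs ((j : ℕ) + 1) (x j.succ)) *
          (ψs ((j : ℕ) + 1) (x j.succ) * Mk ((j : ℕ) + 1) (x j.castSucc) (x j.succ) /
            ∫ y, ψs ((j : ℕ) + 1) y * Mk ((j : ℕ) + 1) (x j.castSucc) y ∂ν)
        = (G ((j : ℕ) + 1) (x j.succ) * Mk ((j : ℕ) + 1) (x j.castSucc) (x j.succ)) *
            (f j.succ / f j.castSucc) := by
      intro j
      have h1 : f j.succ = ∫ y, ψs ((j : ℕ) + 2) y * Mk ((j : ℕ) + 2) (x j.succ) y ∂ν := by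
        rw [hfdef]
        simp only [Fin.val_succ]
      have h2 : f j.castSucc
          = ∫ y, ψs ((j : ℕ) + 1) y * Mk ((j : ℕ) + 1) (x j.castSucc) y ∂ν := by
        rw [hfdef]
        simp only [Fin.coe_castSucc]
      rw [h1, h2]
      have hψne := (hψpos ((j : ℕ) + 1) (x j.succ)).ne'
      have hI1ne := (hMψpos ((j : ℕ) + 1) (x j.castSucc)).ne'
      field_simp
    have hf0 : f 0 = ∫ y, ψs 1 y * Mk 1 (x 0) y ∂ν := by
      rw [hfdef]; simp
    have hflast : f (Fin.last M) = 1 := by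
      rw [hfdef]
      simp only [Fin.val_last]
      exact hItop (x (Fin.last M))
    rw [hA, Finset.prod_congr rfl fun j _ => hfac j, Finset.prod_mul_distrib, htel,
      hflast, hf0]
    rw [← hK0 (x 0), hFzdef]
    have hI1ne : (∫ y, ψs 1 y * Mk 1 (x 0) y ∂ν) ≠ 0 := (hMψpos 1 (x 0)).ne'
    have hCne : C ≠ 0 := hCpos.ne'
    field_simp
  refine ⟨part1, ?_, part3⟩
  rw [integral_congr_ae (Filter.Eventually.of_forall hTU)]
  exact part3.symm
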